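/- Let g_1, ..., g_K ∈ ℝ^p be task gradients. Then 0 is in the convex hull of {g_1, ..., g_K} if and only if min_{w ∈ Δ_K} ‖∑_i w_i g_i‖ = 0, where Δ_K is the probability simplex. Moreover if 0 is not in the convex hull, the minimizer d* = ∑_i w*_i g_i of ‖∑_i w_i g_i‖ over the simplex satisfies ⟨d*, g_i⟩ ≥ ‖d*‖² for all i. -/

import Mathlib

/-- MGDA key property: 0 lies in the convex hull of the task gradients iff the minimum norm
of simplex combinations is 0; and if 0 is not in the hull, the minimum-norm element d* is a
common descent direction: ⟨d*, gᵢ⟩ ≥ ‖d*‖² for all i. -/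
theorem mgda_min_norm_property {p K : ℕ}
    (g : Fin K → EuclideanSpace ℝ (Fin p)) :
    ((0 : EuclideanSpace ℝ (Fin p)) ∈ convexHull ℝ (Set.range g) ↔
      ∃ w ∈ stdSimplex ℝ (Fin K), ‖∑ i, w i • g i‖ = 0) ∧
    (∀ wstar ∈ stdSimplex ℝ (Fin K),
      (∀ w ∈ stdSimplex ℝ (Fin K), ‖∑ i, wstar i • g i‖ ≤ ‖∑ i, w i • g i‖) →
      (0 : EuclideanSpace ℝ (Fin p)) ∉ convexHull ℝ (Set.range g) →
      ∀ i, ‖∑ j, wstar j • g j‖ ^ 2 ≤ (inner ℝ (∑ j, wstar j • g j) (g i) : ℝ)) := by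
  constructor
  · constructor
    · intro h0
      rw [convexHull_range_eq_exists_affineCombination] at h0
      obtain ⟨s, w, hw₀, hw₁, hc⟩ := h0
      refine ⟨fun i => if i ∈ s then w i else 0, ⟨fun i => ?_, ?_⟩, ?_⟩
      · by_cases h : i ∈ s <;> simp [h] <;> exact hw₀ i h
      · rw [← hw₁]
        simp [Finset.sum_ite_mem]
      · rw [Finset.affineCombination_eq_linear_combination s g w hw₁] at hc
        have : ∑ i, (if i ∈ s then w i else 0) • g i = ∑ i ∈ s, w i • g i := by
          simp only [ite_smul, zero_smul, Finset.sum_ite_mem, Finset.univ_inter]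
        rw [this, hc, norm_zero]
    · rintro ⟨w, ⟨hw₀, hw₁⟩, hn⟩
      have hz : ∑ i, w i • g i = 0 := by rwa [norm_eq_zero] at hn
      have := Finset.centerMass_mem_convexHull (Finset.univ : Finset (Fin K))
        (w := w) (z := g) (fun i _ => hw₀ i) (by rw [hw₁]; norm_num)
        (fun i _ => Set.mem_range_self i)
      rwa [Finset.centerMass, hw₁, inv_one, one_smul, hz] at this
  · intro wstar hws hmin _ i
    set d := ∑ j, wstar j • g j with hd
    by_contra hlt
    push_neg at hlt
    set a : ℝ := (inner ℝ d (g i) : ℝ) - ‖d‖ ^ 2 with ha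
    have ha0 : a < 0 := by rw [ha]; linarith
    set b : ℝ := ‖g i - d‖ ^ 2 with hb
    have hkey : ∀ t : ℝ, 0 ≤ t → t ≤ 1 → 0 ≤ 2 * t * a + t ^ 2 * b := by
      intro t ht0 ht1
      have hwt : (fun j => (1 - t) * wstar j + t * (if j = i then 1 else 0))
          ∈ stdSimplex ℝ (Fin K) := by
        constructor
        · intro j
          have := hws.1 j
          have h1t : 0 ≤ 1 - t := by linarith
          positivity
        · rw [Finset.sum_add_distrib, ← Finset.mul_sum, ← Finset.mul_sum, hws.2]
          simp
      have hsum : ∑ j, ((1 - t) * wstar j + t * (if j = i then 1 else 0)) • g j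
          = d + t • (g i - d) := by
        simp only [add_smul, Finset.sum_add_distrib, mul_smul]
        rw [← Finset.smul_sum, ← Finset.smul_sum, ← hd]
        have : ∑ j, ((if j = i then (1:ℝ) else 0) • g j) = g i := by simp
        rw [this, smul_sub, sub_smul, one_smul]
        module
      have hle := hmin _ hwt
      rw [hsum] at hle
      have hsq : ‖d‖ ^ 2 ≤ ‖d + t • (g i - d)‖ ^ 2 := by
        have := norm_nonneg d
        nlinarith
      rw [norm_add_sq_real] at hsq
      rw [real_inner_smul_right, norm_smul, mul_pow] at hsq
      have hti : (inner ℝ d (g i - d) : ℝ) = a := by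
        rw [inner_sub_right, real_inner_self_eq_norm_sq]
      rw [hti] at hsq
      simp only [Real.norm_eq_abs, sq_abs] at hsq
      rw [← hb] at hsq
      linarith
    have hbpos : 0 < b := by
      rcases lt_or_eq_of_le (by positivity : (0:ℝ) ≤ b) with h | h
      · exact h
      · exfalso
        have : g i - d = 0 := by
          have := h.symm
          rwa [hb, pow_eq_zero_iff (by norm_num), norm_eq_zero] at this
        have hgi : g i = d := by rwa [sub_eq_zero] at this
        have : a = 0 := by
          rw [ha, hgi, real_inner_self_eq_norm_sq]; ring
        linarith
    set t : ℝ := min 1 (-a / b) with htdef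
    have ht0 : 0 < t := by
      apply lt_min one_pos
      exact div_pos (by linarith) hbpos
    have ht1 : t ≤ 1 := min_le_left _ _
    have htb : t * b ≤ -a := by
      have h1 : t ≤ -a / b := min_le_right _ _
      calc t * b ≤ (-a / b) * b := by nlinarith
        _ = -a := by field_simp
    have := hkey t ht0.le ht1
    nlinarith
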